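/- Corollary (Corollary 1). If the supports of P_a and P_b are not equal — precisely, if λ({x : f_a(x) > 0 and f_b(x) = 0}) > 0 or λ({x : f_b(x) > 0 and f_a(x) = 0}) > 0 — then almost surely with respect to the law of (X_i)_{i≥1}, the set {u ≥ 1 : X_u is a strong node of (X_1,…,X_u)} is infinite. -/

import Mathlib

open MeasureTheory

namespace TwoStateHMM

/-- Parameters of a two-state hidden Markov model: strictly positive transition
probabilities `paa, pab, pba, pbb` with row sums one, the (unique) stationary initial
distribution `(pia, pib)`, and emission densities `fa, fb` with respect to a σ-finite
measure `lam` on `ℝ^d`, such that the emission distributions differ. -/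
structure HMMParams (d : ℕ) where
  paa : ℝ
  pab : ℝ
  pba : ℝ
  pbb : ℝ
  pia : ℝ
  pib : ℝ
  fa : (Fin d → ℝ) → ℝ
  fb : (Fin d → ℝ) → ℝ
  lam : Measure (Fin d → ℝ)
  paa_pos : 0 < paa
  pab_pos : 0 < pab
  pba_pos : 0 < pba
  pbb_pos : 0 < pbb
  rowa : paa + pab = 1
  rowb : pba + pbb = 1
  pia_pos : 0 < pia
  pib_pos : 0 < pib
  pi_sum : pia + pib = 1
  pi_stat : pia = pia * paa + pib * pba
  fa_nonneg : ∀ x, 0 ≤ fa x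
  fb_nonneg : ∀ x, 0 ≤ fb x
  fa_meas : Measurable fa
  fb_meas : Measurable fb
  lam_sigmaFinite : SigmaFinite lam
  fa_int : ∫ x, fa x ∂lam = 1
  fb_int : ∫ x, fb x ∂lam = 1
  emis_ne : 0 < lam {x | fa x ≠ fb x}

variable {d : ℕ}

/-- Viterbi scores: `delta P x u = (δ_{u+1}(a), δ_{u+1}(b))` of the sequence
`x_1 = x 0, x_2 = x 1, …` (0-indexed time `u` corresponds to the `(u+1)`-th observation). -/
noncomputable def delta (P : HMMParams d) (x : ℕ → (Fin d → ℝ)) : ℕ → ℝ × ℝ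
  | 0 => (P.pia * P.fa (x 0), P.pib * P.fb (x 0))
  | u + 1 =>
      (max ((delta P x u).1 * P.paa) ((delta P x u).2 * P.pba) * P.fa (x (u + 1)),
       max ((delta P x u).1 * P.pab) ((delta P x u).2 * P.pbb) * P.fb (x (u + 1)))

/-- `x u` (the `(u+1)`-th observation) is a strong `a`-node:
`δ(a)·p_aa > δ(b)·p_ba` and `δ(a)·p_ab > δ(b)·p_bb`. -/
def StrongANode (P : HMMParams d) (x : ℕ → (Fin d → ℝ)) (u : ℕ) : Prop :=
  (delta P x u).2 * P.pba < (delta P x u).1 * P.paa ∧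
  (delta P x u).2 * P.pbb < (delta P x u).1 * P.pab

/-- Strong `b`-node. -/
def StrongBNode (P : HMMParams d) (x : ℕ → (Fin d → ℝ)) (u : ℕ) : Prop :=
  (delta P x u).1 * P.paa < (delta P x u).2 * P.pba ∧
  (delta P x u).1 * P.pab < (delta P x u).2 * P.pbb

/-- Strong node: strong `a`-node or strong `b`-node. -/
def StrongNode (P : HMMParams d) (x : ℕ → (Fin d → ℝ)) (u : ℕ) : Prop :=
  StrongANode P x u ∨ StrongBNode P x u

/-- Weak (not necessarily strong) `a`-node. -/
def WeakANode (P : HMMParams d) (x : ℕ → (Fin d → ℝ)) (u : ℕ) : Prop :=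
  (delta P x u).2 * P.pba ≤ (delta P x u).1 * P.paa ∧
  (delta P x u).2 * P.pbb ≤ (delta P x u).1 * P.pab

/-- Weak (not necessarily strong) `b`-node. -/
def WeakBNode (P : HMMParams d) (x : ℕ → (Fin d → ℝ)) (u : ℕ) : Prop :=
  (delta P x u).1 * P.paa ≤ (delta P x u).2 * P.pba ∧
  (delta P x u).1 * P.pab ≤ (delta P x u).2 * P.pbb

/-- Weak node: weak `a`-node or weak `b`-node. -/
def WeakNode (P : HMMParams d) (x : ℕ → (Fin d → ℝ)) (u : ℕ) : Prop :=
  WeakANode P x u ∨ WeakBNode P x u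

/-- The sequence obtained by appending the block `z` after the first `m` elements of `x`. -/
def concatSeq (m : ℕ) (x z : ℕ → (Fin d → ℝ)) : ℕ → (Fin d → ℝ) :=
  fun i => if i < m then x i else z (i - m)

/-- The block `z 0, …, z (k-1)` is a strong barrier: appended to any prefix, it
contains a strong node. -/
def IsStrongBarrier (P : HMMParams d) (k : ℕ) (z : ℕ → (Fin d → ℝ)) : Prop :=
  ∀ (m : ℕ) (x : ℕ → (Fin d → ℝ)),
    ∃ u, m ≤ u ∧ u < m + k ∧ StrongNode P (concatSeq m x z) u

/-- The block `z 0, …, z (k-1)` is a strong `a`-barrier. -/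
def IsStrongABarrier (P : HMMParams d) (k : ℕ) (z : ℕ → (Fin d → ℝ)) : Prop :=
  ∀ (m : ℕ) (x : ℕ → (Fin d → ℝ)),
    ∃ u, m ≤ u ∧ u < m + k ∧ StrongANode P (concatSeq m x z) u

/-- The block `z 0, …, z (k-1)` is a strong `b`-barrier. -/
def IsStrongBBarrier (P : HMMParams d) (k : ℕ) (z : ℕ → (Fin d → ℝ)) : Prop :=
  ∀ (m : ℕ) (x : ℕ → (Fin d → ℝ)),
    ∃ u, m ≤ u ∧ u < m + k ∧ StrongBNode P (concatSeq m x z) u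

/-- Initial probabilities indexed by the hidden state (`true = a`, `false = b`). -/
def HMMParams.initP (P : HMMParams d) : Bool → ℝ := fun s => if s then P.pia else P.pib

/-- Transition probabilities indexed by the hidden states (`true = a`, `false = b`). -/
def HMMParams.transP (P : HMMParams d) : Bool → Bool → ℝ := fun s t =>
  if s then (if t then P.paa else P.pab) else (if t then P.pba else P.pbb)

/-- Emission densities indexed by the hidden state. -/
def HMMParams.dens (P : HMMParams d) : Bool → (Fin d → ℝ) → ℝ := fun s =>
  if s then P.fa else P.fb

/-- Emission distributions `P_a = f_a·λ`, `P_b = f_b·λ`. -/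
noncomputable def HMMParams.emis (P : HMMParams d) : Bool → Measure (Fin d → ℝ) := fun s =>
  P.lam.withDensity fun x => ENNReal.ofReal (P.dens s x)

/-- The likelihood `Λ_π(y_{1:n+1}; x_{1:n+1})` of the hidden path `y` of length `n+1`. -/
noncomputable def likelihood (P : HMMParams d) (n : ℕ) (y : Fin (n + 1) → Bool)
    (x : ℕ → (Fin d → ℝ)) : ℝ :=
  P.initP (y 0) * (∏ i : Fin n, P.transP (y i.castSucc) (y i.succ)) *
    ∏ i : Fin (n + 1), P.dens (y i) (x i)

/-- `(Y, X)` is (a version of) the two-state HMM with parameters `P` on the probability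
space `(Ω, μ)`: the finite-dimensional joint distributions are those of a stationary
Markov chain `Y` with the given transition probabilities, together with observations
`X` that are conditionally independent given `Y`, `X_i` having distribution `P_{Y_i}`. -/
def IsHMM (P : HMMParams d) {Ω : Type} [MeasurableSpace Ω] (μ : Measure Ω)
    (Y : ℕ → Ω → Bool) (X : ℕ → Ω → (Fin d → ℝ)) : Prop :=
  IsProbabilityMeasure μ ∧ (∀ i, Measurable (Y i)) ∧ (∀ i, Measurable (X i)) ∧
  ∀ (n : ℕ) (y : Fin (n + 1) → Bool) (A : Fin (n + 1) → Set (Fin d → ℝ)),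
    (∀ i, MeasurableSet (A i)) →
    μ {ω | ∀ i : Fin (n + 1), Y i ω = y i ∧ X i ω ∈ A i} =
      ENNReal.ofReal (P.initP (y 0) * ∏ i : Fin n, P.transP (y i.castSucc) (y i.succ)) *
        ∏ i : Fin (n + 1), P.emis (y i) (A i)


open scoped ENNReal Topology

/-! ### Auxiliary deterministic lemmas -/

section Deterministic

lemma delta_nonneg (P : HMMParams d) (x : ℕ → (Fin d → ℝ)) :
    ∀ u, 0 ≤ (delta P x u).1 ∧ 0 ≤ (delta P x u).2 := by
  intro u
  induction u with
  | zero =>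
      exact ⟨mul_nonneg P.pia_pos.le (P.fa_nonneg _), mul_nonneg P.pib_pos.le (P.fb_nonneg _)⟩
  | succ u ih =>
      refine ⟨mul_nonneg (le_max_of_le_left (mul_nonneg ih.1 P.paa_pos.le)) (P.fa_nonneg _),
        mul_nonneg (le_max_of_le_left (mul_nonneg ih.1 P.pab_pos.le)) (P.fb_nonneg _)⟩

lemma delta_pos (P : HMMParams d) (x : ℕ → (Fin d → ℝ))
    (h : ∀ i, 0 < P.fa (x i) ∨ 0 < P.fb (x i)) :
    ∀ u, 0 < (delta P x u).1 ∨ 0 < (delta P x u).2 := by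
  intro u
  induction u with
  | zero =>
      rcases h 0 with h0 | h0
      · exact Or.inl (mul_pos P.pia_pos h0)
      · exact Or.inr (mul_pos P.pib_pos h0)
  | succ u ih =>
      have hm1 : 0 < max ((delta P x u).1 * P.paa) ((delta P x u).2 * P.pba) := by
        rcases ih with h1 | h1
        · exact lt_max_of_lt_left (mul_pos h1 P.paa_pos)
        · exact lt_max_of_lt_right (mul_pos h1 P.pba_pos)
      have hm2 : 0 < max ((delta P x u).1 * P.pab) ((delta P x u).2 * P.pbb) := by
        rcases ih with h1 | h1
        · exact lt_max_of_lt_left (mul_pos h1 P.pab_pos)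
        · exact lt_max_of_lt_right (mul_pos h1 P.pbb_pos)
      rcases h (u + 1) with h0 | h0
      · exact Or.inl (mul_pos hm1 h0)
      · exact Or.inr (mul_pos hm2 h0)

lemma strongANode_of (P : HMMParams d) (x : ℕ → (Fin d → ℝ)) (u : ℕ)
    (h : ∀ i, 0 < P.fa (x i) ∨ 0 < P.fb (x i))
    (hfa : 0 < P.fa (x u)) (hfb : P.fb (x u) = 0) : StrongANode P x u := by
  have h2 : (delta P x u).2 = 0 := by
    cases u with
    | zero => simp [delta, hfb]
    | succ v => simp [delta, hfb]
  have h1 : 0 < (delta P x u).1 := by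
    rcases delta_pos P x h u with h' | h'
    · exact h'
    · rw [h2] at h'; exact absurd h' (lt_irrefl 0)
  exact ⟨by rw [h2, zero_mul]; exact mul_pos h1 P.paa_pos,
    by rw [h2, zero_mul]; exact mul_pos h1 P.pab_pos⟩

lemma strongBNode_of (P : HMMParams d) (x : ℕ → (Fin d → ℝ)) (u : ℕ)
    (h : ∀ i, 0 < P.fa (x i) ∨ 0 < P.fb (x i))
    (hfb : 0 < P.fb (x u)) (hfa : P.fa (x u) = 0) : StrongBNode P x u := by
  have h1 : (delta P x u).1 = 0 := by
    cases u with
    | zero => simp [delta, hfa]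
    | succ v => simp [delta, hfa]
  have h2 : 0 < (delta P x u).2 := by
    rcases delta_pos P x h u with h' | h'
    · rw [h1] at h'; exact absurd h' (lt_irrefl 0)
    · exact h'
  exact ⟨by rw [h1, zero_mul]; exact mul_pos h2 P.pba_pos,
    by rw [h1, zero_mul]; exact mul_pos h2 P.pbb_pos⟩

end Deterministic

/-! ### Basic facts about the emission measures -/

section Emission

lemma dens_nonneg (P : HMMParams d) (s : Bool) (x : Fin d → ℝ) : 0 ≤ P.dens s x := by
  cases s <;> simp [HMMParams.dens, P.fa_nonneg, P.fb_nonneg]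

lemma dens_meas (P : HMMParams d) (s : Bool) : Measurable (P.dens s) := by
  cases s <;> simp [HMMParams.dens, P.fa_meas, P.fb_meas]

lemma dens_int (P : HMMParams d) (s : Bool) : ∫ x, P.dens s x ∂P.lam = 1 := by
  cases s <;> simp [HMMParams.dens, P.fa_int, P.fb_int]

lemma emis_apply (P : HMMParams d) (s : Bool) {B : Set (Fin d → ℝ)} (hB : MeasurableSet B) :
    P.emis s B = ∫⁻ x in B, ENNReal.ofReal (P.dens s x) ∂P.lam :=
  withDensity_apply _ hB

instance emis_prob (P : HMMParams d) (s : Bool) : IsProbabilityMeasure (P.emis s) := by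
  constructor
  rw [emis_apply P s MeasurableSet.univ, Measure.restrict_univ,
    ← ofReal_integral_eq_lintegral_ofReal (integrable_of_integral_eq_one (dens_int P s))
      (Filter.Eventually.of_forall (dens_nonneg P s)), dens_int P s, ENNReal.ofReal_one]

lemma emis_le_one (P : HMMParams d) (s : Bool) (B : Set (Fin d → ℝ)) : P.emis s B ≤ 1 :=
  prob_le_one

lemma transP_pos (P : HMMParams d) (s t : Bool) : 0 < P.transP s t := by
  cases s <;> cases t <;>
    simp [HMMParams.transP, P.paa_pos, P.pab_pos, P.pba_pos, P.pbb_pos]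

lemma transP_sum (P : HMMParams d) (s : Bool) :
    ENNReal.ofReal (P.transP s true) + ENNReal.ofReal (P.transP s false) = 1 := by
  cases s
  · simp only [HMMParams.transP, if_true, if_false, Bool.false_eq_true]
    rw [← ENNReal.ofReal_add P.pba_pos.le P.pbb_pos.le, P.rowb, ENNReal.ofReal_one]
  · simp only [HMMParams.transP, if_true, if_false, Bool.false_eq_true]
    rw [← ENNReal.ofReal_add P.paa_pos.le P.pab_pos.le, P.rowa, ENNReal.ofReal_one]

end Emission

/-! ### Finite-dimensional distribution sum formula -/

section Fdd

variable {Ω : Type} [MeasurableSpace Ω] {μ : Measure Ω} {Y : ℕ → Ω → Bool}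
  {X : ℕ → Ω → (Fin d → ℝ)}

lemma fdd_sum (P : HMMParams d) (hHMM : IsHMM P μ Y X) (n : ℕ)
    (B : Fin (n + 1) → Set (Fin d → ℝ)) (hB : ∀ i, MeasurableSet (B i)) :
    μ {ω | ∀ i : Fin (n + 1), X i ω ∈ B i} =
      ∑ y : Fin (n + 1) → Bool,
        ENNReal.ofReal (P.initP (y 0) * ∏ i : Fin n, P.transP (y i.castSucc) (y i.succ)) *
          ∏ i : Fin (n + 1), P.emis (y i) (B i) := by
  obtain ⟨hμ, hY, hX, hfdd⟩ := hHMM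
  have hset : {ω | ∀ i : Fin (n + 1), X i ω ∈ B i}
      = ⋃ y : Fin (n + 1) → Bool, {ω | ∀ i : Fin (n + 1), Y i ω = y i ∧ X i ω ∈ B i} := by
    ext ω
    simp only [Set.mem_setOf_eq, Set.mem_iUnion]
    constructor
    · intro hω; exact ⟨fun i => Y i ω, fun i => ⟨rfl, hω i⟩⟩
    · rintro ⟨y, hy⟩ i; exact (hy i).2
  rw [hset, measure_iUnion ?_ ?_, tsum_fintype]
  · exact Finset.sum_congr rfl fun y _ => hfdd n y B hB
  · intro y y' hyy'
    rw [Function.onFun, Set.disjoint_left]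
    intro ω h1 h2
    exact hyy' (funext fun i => ((h1 i).1).symm.trans (h2 i).1)
  · intro y
    have : {ω | ∀ i : Fin (n + 1), Y i ω = y i ∧ X i ω ∈ B i}
        = ⋂ i : Fin (n + 1), (Y i ⁻¹' {y i} ∩ X i ⁻¹' B i) := by
      ext ω; simp [Set.mem_iInter, forall_and]
    rw [this]
    exact MeasurableSet.iInter fun i =>
      ((hY i) (measurableSet_singleton _)).inter ((hX i) (hB i))

end Fdd

/-! ### The key chain estimate -/

section Key

lemma key (P : HMMParams d) :
    ∀ (n : ℕ) (g : ℕ → Bool → ℝ≥0∞) (c : ℕ → ℝ≥0∞) (ι : Bool → ℝ≥0∞) (C0 : ℝ≥0∞),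
    (∀ (s : Bool) (j : ℕ), ENNReal.ofReal (P.transP s true) * g j true
        + ENNReal.ofReal (P.transP s false) * g j false ≤ c j) →
    (ι true + ι false ≤ C0) →
    ∑ y : Fin (n + 1) → Bool, ι (y 0) *
      ∏ i : Fin n, (ENNReal.ofReal (P.transP (y i.castSucc) (y i.succ)) *
        g ((i : ℕ) + 1) (y i.succ))
      ≤ C0 * ∏ i : Fin n, c ((i : ℕ) + 1) := by
  intro n
  induction n with
  | zero =>
      intro g c ι C0 hc hι
      have : ∑ y : Fin 1 → Bool, ι (y 0) *
          ∏ i : Fin 0, (ENNReal.ofReal (P.transP (y i.castSucc) (y i.succ)) *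
            g ((i : ℕ) + 1) (y i.succ)) = ∑ t : Bool, ι t := by
        refine Fintype.sum_equiv (Equiv.funUnique (Fin 1) Bool) _ _ fun y => ?_
        simp
      rw [this, Fintype.sum_bool]
      simpa using hι
  | succ n ih =>
      intro g c ι C0 hc hι
      have hsum : ∑ y : Fin (n + 2) → Bool, ι (y 0) * ∏ i : Fin (n + 1),
            (ENNReal.ofReal (P.transP (y i.castSucc) (y i.succ)) * g ((i : ℕ) + 1) (y i.succ))
          = ∑ t : Bool, ι t * ∑ z : Fin (n + 1) → Bool,
              ((ENNReal.ofReal (P.transP t (z 0)) * g 1 (z 0)) *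
              ∏ i : Fin n, (ENNReal.ofReal (P.transP (z i.castSucc) (z i.succ)) *
                g ((i : ℕ) + 2) (z i.succ))) := by
        rw [← Equiv.sum_comp (Fin.consEquiv (fun _ : Fin (n + 2) => Bool))]
        rw [Fintype.sum_prod_type]
        refine Finset.sum_congr rfl fun t _ => ?_
        rw [Finset.mul_sum]
        refine Finset.sum_congr rfl fun z _ => ?_
        simp only [Fin.consEquiv_apply]
        rw [Fin.prod_univ_succ]
        simp only [Fin.cons_zero, Fin.cons_succ, Fin.castSucc_zero, Fin.succ_zero_eq_one,
          ← Fin.succ_castSucc, Fin.val_succ, Fin.val_zero]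
        ring_nf
        rw [show @Fin.cons (n + 1) (fun _ => Bool) t z 1 = z 0 from rfl]
        ring
      rw [hsum]
      have inner : ∀ t : Bool, (∑ z : Fin (n + 1) → Bool,
            ((ENNReal.ofReal (P.transP t (z 0)) * g 1 (z 0)) *
            ∏ i : Fin n, (ENNReal.ofReal (P.transP (z i.castSucc) (z i.succ)) *
              g ((i : ℕ) + 2) (z i.succ))))
          ≤ c 1 * ∏ i : Fin n, c ((i : ℕ) + 2) := by
        intro t
        exact ih (fun j s => g (j + 1) s) (fun j => c (j + 1))
          (fun s => ENNReal.ofReal (P.transP t s) * g 1 s) (c 1)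
          (fun s j => hc s (j + 1)) (hc t 1)
      calc ∑ t : Bool, ι t * _ ≤ ∑ t : Bool, ι t * (c 1 * ∏ i : Fin n, c ((i : ℕ) + 2)) :=
            Finset.sum_le_sum fun t _ => mul_le_mul_right (inner t) _
        _ = (ι true + ι false) * (c 1 * ∏ i : Fin n, c ((i : ℕ) + 2)) := by
            rw [Fintype.sum_bool, add_mul]
        _ ≤ C0 * (c 1 * ∏ i : Fin n, c ((i : ℕ) + 2)) := mul_le_mul_left hι _
        _ = C0 * ∏ i : Fin (n + 1), c ((i : ℕ) + 1) := by
            rw [Fin.prod_univ_succ]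
            simp [Fin.val_succ]

end Key

/-! ### The main argument -/

section Main

variable {Ω : Type} [MeasurableSpace Ω] {μ : Measure Ω} {Y : ℕ → Ω → Bool}
  {X : ℕ → Ω → (Fin d → ℝ)}

lemma initP_nonneg (P : HMMParams d) (s : Bool) : 0 ≤ P.initP s := by
  cases s <;> simp [HMMParams.initP, P.pia_pos.le, P.pib_pos.le]

lemma main_aux (P : HMMParams d) (hHMM : IsHMM P μ Y X)
    (s₀ : Bool) (A : Set (Fin d → ℝ)) (hAm : MeasurableSet A)
    (hApos : 0 < P.emis s₀ A)
    (hnode : ∀ (x : ℕ → (Fin d → ℝ)) (u : ℕ),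
      (∀ i, 0 < P.fa (x i) ∨ 0 < P.fb (x i)) → x u ∈ A → StrongNode P x u) :
    ∀ᵐ ω ∂μ, {u : ℕ | StrongNode P (fun i => X i ω) u}.Infinite := by
  classical
  set α := P.emis s₀ A with hα
  have hα1 : α ≤ 1 := emis_le_one P s₀ A
  set q : ℝ≥0∞ := ENNReal.ofReal (min (P.transP true s₀) (P.transP false s₀)) with hqdef
  have hq0 : 0 < q :=
    ENNReal.ofReal_pos.2 (lt_min (transP_pos P true s₀) (transP_pos P false s₀))
  have hqle : ∀ s : Bool, q ≤ ENNReal.ofReal (P.transP s s₀) := by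
    intro s; cases s
    · exact ENNReal.ofReal_le_ofReal (min_le_right _ _)
    · exact ENNReal.ofReal_le_ofReal (min_le_left _ _)
  set r : ℝ≥0∞ := 1 - q * α with hrdef
  have hr1 : r < 1 :=
    ENNReal.sub_lt_self ENNReal.one_ne_top one_ne_zero
      (mul_ne_zero hq0.ne' hApos.ne')
  have hrle : r ≤ 1 := tsub_le_self
  -- the "all densities vanish" set
  set Z : Set (Fin d → ℝ) := {x | P.fa x = 0 ∧ P.fb x = 0} with hZdef
  have hZm : MeasurableSet Z :=
    (P.fa_meas (measurableSet_singleton 0)).inter (P.fb_meas (measurableSet_singleton 0))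
  have hZemis : ∀ s, P.emis s Z = 0 := by
    intro s
    rw [emis_apply P s hZm]
    have : ∫⁻ x in Z, ENNReal.ofReal (P.dens s x) ∂P.lam = ∫⁻ _x in Z, 0 ∂P.lam :=
      setLIntegral_congr_fun hZm (fun x hx => by
        cases s
        · show ENNReal.ofReal (P.fb x) = 0
          rw [hx.2, ENNReal.ofReal_zero]
        · show ENNReal.ofReal (P.fa x) = 0
          rw [hx.1, ENNReal.ofReal_zero])
    rw [this, lintegral_zero]
  -- null sets of the first kind
  have hZnull : ∀ i : ℕ, μ {ω | X i ω ∈ Z} = 0 := by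
    intro i
    have hBm : ∀ j : Fin (i + 1),
        MeasurableSet (if (j : ℕ) = i then Z else (Set.univ : Set (Fin d → ℝ))) := by
      intro j
      by_cases hj : (j : ℕ) = i
      · rw [if_pos hj]; exact hZm
      · rw [if_neg hj]; exact MeasurableSet.univ
    have hseteq : {ω | X i ω ∈ Z} =
        {ω | ∀ j : Fin (i + 1), X j ω ∈ (if (j : ℕ) = i then Z else Set.univ)} := by
      ext ω
      simp only [Set.mem_setOf_eq]
      constructor
      · intro h j
        by_cases hj : (j : ℕ) = i
        · rw [if_pos hj, hj]; exact h
        · rw [if_neg hj]; trivial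
      · intro h
        have := h (Fin.last i)
        simpa using this
    rw [hseteq, fdd_sum P hHMM i _ hBm]
    refine Finset.sum_eq_zero fun y _ => ?_
    rw [Finset.prod_eq_zero (Finset.mem_univ (Fin.last i)), mul_zero]
    simp [Fin.val_last, hZemis]
  -- null sets of the second kind: tails avoiding A
  have hTnull : ∀ N : ℕ, μ {ω | ∀ u : ℕ, N ≤ u → X u ω ∉ A} = 0 := by
    intro N
    set B : ℕ → Set (Fin d → ℝ) := fun j => if N ≤ j then Aᶜ else Set.univ with hBdef
    have hBm : ∀ j : ℕ, MeasurableSet (B j) := fun j => by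
      rw [hBdef]
      by_cases hj : N ≤ j
      · simp only [if_pos hj]; exact hAm.compl
      · simp only [if_neg hj]; exact MeasurableSet.univ
    set g : ℕ → Bool → ℝ≥0∞ := fun j s => P.emis s (B j) with hgdef
    have hg1 : ∀ (j : ℕ) (s : Bool), g j s ≤ 1 := fun j s => emis_le_one P s (B j)
    set c : ℕ → ℝ≥0∞ := fun j => if N ≤ j then r else 1 with hcdef
    have main2 : ∀ u v w : ℝ≥0∞, u + v = 1 → q ≤ u → w ≤ 1 → u * (1 - α) + v * w ≤ r := by
      intro u v w huv hqu hw
      have hu_top : u ≠ ∞ := by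
        intro h; rw [h] at huv; simp at huv
      have h1 : u * (1 - α) = u - u * α := by
        rw [ENNReal.mul_sub (fun _ _ => hu_top), mul_one]
      have h2 : u * α ≤ u := by
        calc u * α ≤ u * 1 := mul_le_mul_right hα1 u
          _ = u := mul_one u
      calc u * (1 - α) + v * w ≤ u * (1 - α) + v := by
            exact add_le_add le_rfl (mul_le_of_le_one_right' hw)
        _ = u + v - u * α := by
            rw [h1, ENNReal.sub_add_eq_add_sub h2 (fun h => hu_top (eq_top_mono h2 h))]
        _ = 1 - u * α := by rw [huv]
        _ ≤ 1 - q * α := tsub_le_tsub_left (mul_le_mul_left hqu α) 1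
  -- `r` definition
        _ = r := hrdef.symm
    have hc : ∀ (s : Bool) (j : ℕ),
        ENNReal.ofReal (P.transP s true) * g j true
          + ENNReal.ofReal (P.transP s false) * g j false ≤ c j := by
      intro s j
      by_cases hj : N ≤ j
      · have hcj : c j = r := if_pos hj
        have hBj : B j = Aᶜ := if_pos hj
        have hcompl : ∀ s' : Bool, g j s' = P.emis s' Aᶜ := fun s' => by
          rw [hgdef]; simp only; rw [hBj]
        have hcompl₀ : P.emis s₀ Aᶜ = 1 - α := by
          rw [hα]; exact prob_compl_eq_one_sub hAm
        rw [hcj, hcompl, hcompl]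
        revert hcompl₀
        cases s₀ <;> intro hcompl₀
        · -- s₀ = false
          rw [hcompl₀, add_comm]
          exact main2 _ _ _ (by rw [add_comm]; exact transP_sum P s) (hqle s)
            (emis_le_one P true _)
        · -- s₀ = true
          rw [hcompl₀]
          exact main2 _ _ _ (transP_sum P s) (hqle s) (emis_le_one P false _)
      · have hcj : c j = 1 := if_neg hj
        rw [hcj]
        calc ENNReal.ofReal (P.transP s true) * g j true
              + ENNReal.ofReal (P.transP s false) * g j false
            ≤ ENNReal.ofReal (P.transP s true) * 1 + ENNReal.ofReal (P.transP s false) * 1 :=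
              add_le_add (mul_le_mul_right (hg1 j true) _) (mul_le_mul_right (hg1 j false) _)
          _ = 1 := by rw [mul_one, mul_one]; exact transP_sum P s
    have hbound : ∀ n : ℕ, μ {ω | ∀ u : ℕ, N ≤ u → X u ω ∉ A} ≤ r ^ n := by
      intro n
      have hsub : {ω | ∀ u : ℕ, N ≤ u → X u ω ∉ A}
          ⊆ {ω | ∀ j : Fin (N + n + 1), X j ω ∈ (fun j : Fin (N + n + 1) => B (j : ℕ)) j} := by
        intro ω hω j
        simp only
        rw [hBdef]
        by_cases hj : N ≤ (j : ℕ)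
        · simp only [if_pos hj]; exact hω _ hj
        · simp only [if_neg hj]; trivial
      refine le_trans (measure_mono hsub) ?_
      rw [fdd_sum P hHMM (N + n) (fun j => B (j : ℕ)) (fun j => hBm _)]
      have hterm : ∀ y : Fin (N + n + 1) → Bool,
          ENNReal.ofReal (P.initP (y 0) *
              ∏ i : Fin (N + n), P.transP (y i.castSucc) (y i.succ)) *
            ∏ i : Fin (N + n + 1), P.emis (y i) (B (i : ℕ))
          = (ENNReal.ofReal (P.initP (y 0)) * g 0 (y 0)) *
            ∏ i : Fin (N + n), (ENNReal.ofReal (P.transP (y i.castSucc) (y i.succ)) *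
              g ((i : ℕ) + 1) (y i.succ)) := by
        intro y
        rw [ENNReal.ofReal_mul (initP_nonneg P (y 0)),
          ENNReal.ofReal_prod_of_nonneg (fun i _ => (transP_pos P _ _).le),
          Fin.prod_univ_succ]
        simp only [hgdef, Fin.val_succ, Fin.val_zero]
        rw [Finset.prod_mul_distrib]
        ring
      rw [Finset.sum_congr rfl (fun y _ => hterm y)]
      have hι : (fun s => ENNReal.ofReal (P.initP s) * g 0 s) true
          + (fun s => ENNReal.ofReal (P.initP s) * g 0 s) false ≤ 1 := by
        simp only
        calc ENNReal.ofReal (P.initP true) * g 0 true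
              + ENNReal.ofReal (P.initP false) * g 0 false
            ≤ ENNReal.ofReal (P.initP true) * 1 + ENNReal.ofReal (P.initP false) * 1 :=
              add_le_add (mul_le_mul_right (hg1 0 true) _) (mul_le_mul_right (hg1 0 false) _)
          _ = 1 := by
              rw [mul_one, mul_one]
              show ENNReal.ofReal P.pia + ENNReal.ofReal P.pib = 1
              rw [← ENNReal.ofReal_add P.pia_pos.le P.pib_pos.le, P.pi_sum, ENNReal.ofReal_one]
      refine le_trans (key P (N + n) g c (fun s => ENNReal.ofReal (P.initP s) * g 0 s) 1 hc hι) ?_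
      rw [one_mul]
      rw [Fin.prod_univ_eq_prod_range (fun i => c (i + 1)) (N + n)]
      rw [Finset.prod_range_add]
      have h1 : (∏ i ∈ Finset.range N, c (i + 1)) ≤ 1 :=
        Finset.prod_le_one (fun _ _ => zero_le) (fun i _ => by
          rw [hcdef]
          by_cases hi : N ≤ i + 1
          · simp only [if_pos hi]; exact hrle
          · simp only [if_neg hi]; exact le_refl 1)
      have h2 : (∏ i ∈ Finset.range n, c (N + i + 1)) = r ^ n := by
        rw [Finset.prod_congr rfl (fun i _ => show c (N + i + 1) = r by
          rw [hcdef]; simp only; rw [if_pos (by omega)])]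
        rw [Finset.prod_const, Finset.card_range]
      calc (∏ i ∈ Finset.range N, c (i + 1)) * ∏ i ∈ Finset.range n, c (N + i + 1)
          ≤ 1 * ∏ i ∈ Finset.range n, c (N + i + 1) := mul_le_mul_left h1 _
        _ = r ^ n := by rw [one_mul, h2]
    have htend := ENNReal.tendsto_pow_atTop_nhds_zero_of_lt_one hr1
    exact le_zero_iff.mp (ge_of_tendsto' htend hbound)
  -- assemble
  rw [ae_iff]
  have hnull : μ ((⋃ i, {ω | X i ω ∈ Z}) ∪ ⋃ N, {ω | ∀ u : ℕ, N ≤ u → X u ω ∉ A}) = 0 :=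
    measure_union_null (measure_iUnion_null hZnull) (measure_iUnion_null hTnull)
  refine measure_mono_null ?_ hnull
  intro ω hω
  simp only [Set.mem_setOf_eq] at hω
  by_contra hU
  simp only [Set.mem_union, Set.mem_iUnion, Set.mem_setOf_eq, not_or, not_exists] at hU
  obtain ⟨hU1, hU2⟩ := hU
  have hpos : ∀ i, 0 < P.fa (X i ω) ∨ 0 < P.fb (X i ω) := by
    intro i
    have hi := hU1 i
    by_cases hfa : P.fa (X i ω) = 0
    · right
      rcases (P.fb_nonneg (X i ω)).lt_or_eq with h | h
      · exact h
      · exact absurd (⟨hfa, h.symm⟩ : X i ω ∈ Z) hi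
    · left; exact lt_of_le_of_ne (P.fa_nonneg _) (Ne.symm hfa)
  have hio : ∀ N : ℕ, ∃ u, N ≤ u ∧ X u ω ∈ A := by
    intro N
    have hN := hU2 N
    push_neg at hN
    obtain ⟨u, hu1, hu2⟩ := hN
    exact ⟨u, hu1, hu2⟩
  have hfin : {u : ℕ | StrongNode P (fun i => X i ω) u}.Finite := Set.not_infinite.mp hω
  obtain ⟨m, hm⟩ := hfin.bddAbove
  obtain ⟨u, hu1, hu2⟩ := hio (m + 1)
  have hum : u ≤ m := hm (hnode _ u hpos hu2)
  omega

end Main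

/-- **Corollary 1.** If the supports of `P_a` and `P_b` are not equal, then almost every
realization has infinitely many strong nodes. -/
theorem corollary1_unequal_supports {d : ℕ} (P : HMMParams d) {Ω : Type}
    [MeasurableSpace Ω] (μ : Measure Ω) (Y : ℕ → Ω → Bool) (X : ℕ → Ω → (Fin d → ℝ))
    (hHMM : IsHMM P μ Y X)
    (hsupp : 0 < P.lam {x | 0 < P.fa x ∧ P.fb x = 0} ∨
             0 < P.lam {x | 0 < P.fb x ∧ P.fa x = 0}) :
    ∀ᵐ ω ∂μ, {u : ℕ | StrongNode P (fun i => X i ω) u}.Infinite := by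
  rcases hsupp with h | h
  · set A : Set (Fin d → ℝ) := {x | 0 < P.fa x ∧ P.fb x = 0} with hAdef
    have hAm : MeasurableSet A :=
      (measurableSet_lt measurable_const P.fa_meas).inter
        (P.fb_meas (measurableSet_singleton 0))
    have hApos : 0 < P.emis true A := by
      rw [pos_iff_ne_zero]
      intro h0
      rw [emis_apply P true hAm,
        setLIntegral_eq_zero_iff hAm (dens_meas P true).ennreal_ofReal, ae_iff] at h0
      refine h.ne' (measure_mono_null ?_ h0)
      intro x hx
      simp only [Set.mem_setOf_eq, Classical.not_imp]
      exact ⟨hx, (ENNReal.ofReal_pos.2 (show (0 : ℝ) < P.dens true x from hx.1)).ne'⟩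
    refine main_aux P hHMM true A hAm hApos ?_
    intro x u hpos hxA
    exact Or.inl (strongANode_of P x u hpos hxA.1 hxA.2)
  · set A : Set (Fin d → ℝ) := {x | 0 < P.fb x ∧ P.fa x = 0} with hAdef
    have hAm : MeasurableSet A :=
      (measurableSet_lt measurable_const P.fb_meas).inter
        (P.fa_meas (measurableSet_singleton 0))
    have hApos : 0 < P.emis false A := by
      rw [pos_iff_ne_zero]
      intro h0
      rw [emis_apply P false hAm,
        setLIntegral_eq_zero_iff hAm (dens_meas P false).ennreal_ofReal, ae_iff] at h0
      refine h.ne' (measure_mono_null ?_ h0)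
      intro x hx
      simp only [Set.mem_setOf_eq, Classical.not_imp]
      exact ⟨hx, (ENNReal.ofReal_pos.2 (show (0 : ℝ) < P.dens false x from hx.1)).ne'⟩
    refine main_aux P hHMM false A hAm hApos ?_
    intro x u hpos hxA
    exact Or.inr (strongBNode_of P x u hpos hxA.1 hxA.2)
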